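/- Define convolved Fibonacci numbers by F_N^{(0)} = F_N and F_N^{(s)} = ∑_{j=0}^{N-1} F_{j+1} · F_{N-j}^{(s-1)} for s ≥ 1. Then for all N ≥ 1 and s ≥ 0, F_N^{(s)} = ((-i)^(N-1) / (2^s · s!)) · U_{N+s-1}^{(s)}(i/2). -/

import Mathlib

open Polynomial Polynomial.Chebyshev Finset

lemma itd_sub (k : ℕ) (p q : ℂ[X]) :
    derivative^[k] (p - q) = derivative^[k] p - derivative^[k] q := by
  induction k generalizing p q with
  | zero => simp
  | succ k ih => simp [Function.iterate_succ_apply, derivative_sub, ih]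

lemma itd_X_mul (k : ℕ) (p : ℂ[X]) :
    derivative^[k + 1] (X * p) =
      C ((k : ℂ) + 1) * derivative^[k] p + X * derivative^[k + 1] p := by
  induction k with
  | zero => simp [derivative_mul]
  | succ k ih =>
    rw [Function.iterate_succ_apply' derivative (k + 1) (X * p), ih]
    simp only [derivative_add, derivative_mul, derivative_C, derivative_X,
      ← Function.iterate_succ_apply' derivative]
    push_cast
    rw [map_add]
    simp [C_1]
    ring

lemma U_rec_iter (s : ℕ) (n : ℤ) :
    derivative^[s + 1] (Polynomial.Chebyshev.U ℂ (n + 2)) =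
      2 * X * derivative^[s + 1] (Polynomial.Chebyshev.U ℂ (n + 1)) +
        C (2 * ((s : ℂ) + 1)) * derivative^[s] (Polynomial.Chebyshev.U ℂ (n + 1)) -
          derivative^[s + 1] (Polynomial.Chebyshev.U ℂ n) := by
  rw [U_add_two, itd_sub]
  have h : (2 : ℂ[X]) * X * Polynomial.Chebyshev.U ℂ (n + 1) =
      C 2 * (X * Polynomial.Chebyshev.U ℂ (n + 1)) := by
    rw [map_ofNat]; ring
  rw [h, iterate_derivative_C_mul, itd_X_mul, map_ofNat]
  rw [show ((2 : ℂ) * ((s : ℂ) + 1)) = 2 * ((s:ℂ)+1) from rfl, map_mul, map_add, map_one,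
    map_ofNat]
  ring

lemma U_itd_zero : ∀ m : ℕ, derivative^[m + 1] (Polynomial.Chebyshev.U ℂ m) = 0 := by
  intro m
  induction m using Nat.twoStepInduction with
  | zero => simp [U_zero]
  | one =>
    show derivative (derivative (Polynomial.Chebyshev.U ℂ 1)) = 0
    simp [U_one]
  | more n ih0 ih1 =>
    have h := U_rec_iter (n + 2) (n : ℤ)
    have e0 : ((n : ℤ) + 2) = ((n + 2 : ℕ) : ℤ) := by push_cast; ring
    have e1 : ((n : ℤ) + 1) = ((n + 1 : ℕ) : ℤ) := by push_cast; ring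
    rw [e0, e1] at h
    have z1 : derivative^[n + 2 + 1] (Polynomial.Chebyshev.U ℂ ((n + 1 : ℕ) : ℤ)) = 0 := by
      rw [Function.iterate_succ_apply' derivative (n + 2), ih1, map_zero]
    have z0 : derivative^[n + 2] (Polynomial.Chebyshev.U ℂ (n : ℤ)) = 0 := by
      rw [Function.iterate_succ_apply' derivative (n + 1), ih0, map_zero]
    have z0' : derivative^[n + 2 + 1] (Polynomial.Chebyshev.U ℂ (n : ℤ)) = 0 := by
      rw [Function.iterate_succ_apply' derivative (n + 2), z0, map_zero]
    rw [h, z1, ih1, z0']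
    simp

lemma U_itd_top : ∀ m : ℕ, derivative^[m] (Polynomial.Chebyshev.U ℂ m) =
    C ((2 : ℂ) ^ m * m.factorial) := by
  intro m
  induction m using Nat.twoStepInduction with
  | zero => simp [U_zero]
  | one =>
    show derivative (Polynomial.Chebyshev.U ℂ 1) = _
    simp [U_one]
    norm_num [map_ofNat]
  | more n ih0 ih1 =>
    have h := U_rec_iter (n + 1) (n : ℤ)
    have e0 : ((n : ℤ) + 2) = ((n + 2 : ℕ) : ℤ) := by push_cast; ring
    have e1 : ((n : ℤ) + 1) = ((n + 1 : ℕ) : ℤ) := by push_cast; ring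
    rw [e0, e1] at h
    have z1 : derivative^[n + 1 + 1] (Polynomial.Chebyshev.U ℂ ((n + 1 : ℕ) : ℤ)) = 0 :=
      U_itd_zero (n + 1)
    have z0 : derivative^[n + 1 + 1] (Polynomial.Chebyshev.U ℂ (n : ℤ)) = 0 := by
      rw [Function.iterate_succ_apply' derivative (n + 1), U_itd_zero n, map_zero]
    rw [h, z1, ih1, z0, ← map_mul]
    simp only [mul_zero, zero_mul, zero_add, sub_zero]
    congr 1
    rw [Nat.factorial_succ (n + 1)]
    push_cast
    ring

lemma U_conv (s : ℕ) : ∀ n : ℕ,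
    derivative^[s + 1] (Polynomial.Chebyshev.U ℂ ((n : ℤ) + s + 1)) =
      C (2 * ((s : ℂ) + 1)) *
        ∑ j ∈ Finset.range (n + 1),
          Polynomial.Chebyshev.U ℂ (j : ℤ) *
            derivative^[s] (Polynomial.Chebyshev.U ℂ ((n : ℤ) - (j : ℤ) + s)) := by
  intro n
  induction n using Nat.twoStepInduction with
  | zero =>
    rw [Finset.sum_range_one]
    have e : ((0:ℕ) : ℤ) + s + 1 = ((s + 1 : ℕ) : ℤ) := by push_cast; ring
    have e2 : ((0:ℕ) : ℤ) - ((0:ℕ) : ℤ) + s = ((s : ℕ) : ℤ) := by push_cast; ring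
    rw [e, e2, U_itd_top, U_itd_top]
    have u0 : Polynomial.Chebyshev.U ℂ ((0:ℕ) : ℤ) = 1 := by norm_num [U_zero]
    rw [u0, one_mul, ← map_mul]
    exact congrArg C (by rw [Nat.factorial_succ]; push_cast; ring)
  | one =>
    have h := U_rec_iter s (s : ℤ)
    have e : ((1:ℕ) : ℤ) + s + 1 = (s : ℤ) + 2 := by push_cast; ring
    have es1 : (s : ℤ) + 1 = ((s + 1 : ℕ) : ℤ) := by push_cast; ring
    rw [e, h, Finset.sum_range_succ, Finset.sum_range_one]
    have e0 : ((1:ℕ) : ℤ) - ((0:ℕ) : ℤ) + s = ((s + 1 : ℕ) : ℤ) := by push_cast; ring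
    have e1 : ((1:ℕ) : ℤ) - ((1:ℕ) : ℤ) + s = ((s : ℕ) : ℤ) := by push_cast; ring
    rw [e0, e1, es1, U_itd_top, U_itd_top, U_itd_zero s]
    have u1 : Polynomial.Chebyshev.U ℂ ((1:ℕ) : ℤ) = 2 * X := by norm_num [U_one]
    have u0 : Polynomial.Chebyshev.U ℂ ((0:ℕ) : ℤ) = 1 := by norm_num [U_zero]
    rw [u0, u1]
    rw [show C ((2:ℂ)^(s+1) * (s+1).factorial) = C (2 * ((s:ℂ)+1)) * C ((2:ℂ)^s * s.factorial) from ?_]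
    · ring
    · rw [← map_mul]
      congr 1
      rw [Nat.factorial_succ]
      push_cast; ring
  | more n ih0 ih1 =>
    -- recurrence for LHS
    have h := U_rec_iter s ((n : ℤ) + s + 1)
    have eL : ((n + 2 : ℕ) : ℤ) + s + 1 = ((n : ℤ) + s + 1) + 2 := by push_cast; ring
    have eM : ((n : ℤ) + s + 1) + 1 = ((n + 1 : ℕ) : ℤ) + s + 1 := by push_cast; ring
    rw [eL, h, eM, ih1]
    -- sum manipulation
    have hsum : ∑ j ∈ Finset.range (n + 2 + 1),
        Polynomial.Chebyshev.U ℂ (j : ℤ) *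
          derivative^[s] (Polynomial.Chebyshev.U ℂ (((n + 2 : ℕ) : ℤ) - (j : ℤ) + s)) =
        derivative^[s] (Polynomial.Chebyshev.U ℂ ((n : ℤ) + s + 2)) +
        2 * X * (∑ j ∈ Finset.range (n + 1 + 1),
          Polynomial.Chebyshev.U ℂ (j : ℤ) *
            derivative^[s] (Polynomial.Chebyshev.U ℂ (((n + 1 : ℕ) : ℤ) - (j : ℤ) + s))) -
        ∑ j ∈ Finset.range (n + 1),
          Polynomial.Chebyshev.U ℂ (j : ℤ) *
            derivative^[s] (Polynomial.Chebyshev.U ℂ ((n : ℤ) - (j : ℤ) + s)) := by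
      rw [Finset.sum_range_succ' _ (n + 2), Finset.sum_range_succ' _ (n + 1)]
      rw [Finset.sum_range_succ' _ (n + 1)]
      have key : ∀ j : ℕ, Polynomial.Chebyshev.U ℂ ((j + 1 + 1 : ℕ) : ℤ) *
          derivative^[s] (Polynomial.Chebyshev.U ℂ (((n + 2 : ℕ) : ℤ) - ((j + 1 + 1 : ℕ) : ℤ) + s)) =
          2 * X * (Polynomial.Chebyshev.U ℂ ((j + 1 : ℕ) : ℤ) *
            derivative^[s] (Polynomial.Chebyshev.U ℂ (((n + 1 : ℕ) : ℤ) - ((j + 1 : ℕ) : ℤ) + s))) -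
          Polynomial.Chebyshev.U ℂ (j : ℤ) *
            derivative^[s] (Polynomial.Chebyshev.U ℂ ((n : ℤ) - (j : ℤ) + s)) := by
        intro j
        have eu : ((j + 1 + 1 : ℕ) : ℤ) = (j : ℤ) + 2 := by push_cast; ring
        have eu1 : ((j + 1 : ℕ) : ℤ) = (j : ℤ) + 1 := by push_cast; ring
        have ea : ((n + 2 : ℕ) : ℤ) - ((j : ℤ) + 2) + s = (n : ℤ) - j + s := by push_cast; ring
        have eb : ((n + 1 : ℕ) : ℤ) - ((j : ℤ) + 1) + s = (n : ℤ) - j + s := by push_cast; ring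
        rw [eu, eu1, ea, eb, U_add_two]
        ring
      rw [Finset.sum_congr rfl fun j _ => key j]
      rw [Finset.sum_sub_distrib, ← Finset.mul_sum]
      have ez : Polynomial.Chebyshev.U ℂ ((0:ℕ) : ℤ) = 1 := by norm_num [U_zero]
      have ezz : ((n + 2 : ℕ) : ℤ) - ((0:ℕ) : ℤ) + s = (n : ℤ) + s + 2 := by push_cast; ring
      have eo : Polynomial.Chebyshev.U ℂ ((0 + 1 : ℕ) : ℤ) = 2 * X := by norm_num [U_one]
      have eoz : ((n + 2 : ℕ) : ℤ) - ((0 + 1 : ℕ) : ℤ) + s = ((n + 1 : ℕ) : ℤ) - ((0:ℕ) : ℤ) + s := by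
        push_cast; ring
      rw [ez, ezz, eo, eoz]
      ring
    rw [ih0, hsum]
    have e2 : ((n + 1 : ℕ) : ℤ) + s + 1 = (n : ℤ) + s + 2 := by push_cast; ring
    rw [e2]
    ring

lemma U_eval_fib : ∀ n : ℕ,
    (Polynomial.Chebyshev.U ℂ (n : ℤ)).eval (Complex.I / 2) =
      Complex.I ^ n * Nat.fib (n + 1) := by
  intro n
  induction n using Nat.twoStepInduction with
  | zero => norm_num [U_zero]
  | one =>
    have u1 : Polynomial.Chebyshev.U ℂ ((1:ℕ) : ℤ) = 2 * X := by norm_num [U_one]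
    rw [u1]
    simp [Nat.fib]
    ring
  | more n ih0 ih1 =>
    have e : ((n + 2 : ℕ) : ℤ) = (n : ℤ) + 2 := by push_cast; ring
    have e1 : ((n : ℤ) + 1) = ((n + 1 : ℕ) : ℤ) := by push_cast; ring
    rw [e, U_add_two, e1]
    rw [eval_sub, eval_mul, eval_mul, eval_X, eval_ofNat, ih0, ih1]
    rw [Nat.fib_add_two (n := n + 1)]
    push_cast
    have : Complex.I ^ (n + 2) = -Complex.I ^ n := by
      rw [pow_add, Complex.I_sq]; ring
    rw [pow_succ (Complex.I) (n+1), pow_succ (Complex.I) n] at *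
    field_simp
    ring_nf
    rw [Complex.I_sq]
    ring

/-- Convolved Fibonacci numbers: `fibConv 0 N = F_N`,
`fibConv s N = ∑_{j=0}^{N-1} F_{j+1} · fibConv (s-1) (N-j)`. -/
def fibConv : ℕ → ℕ → ℕ
  | 0, N => Nat.fib N
  | s + 1, N => ∑ j ∈ Finset.range N, Nat.fib (j + 1) * fibConv s (N - j)

theorem stmt13 (N s : ℕ) (hN : 1 ≤ N) :
    (fibConv s N : ℂ) =
      (-Complex.I) ^ (N - 1) / (2 ^ s * s.factorial) *
        (Polynomial.derivative^[s] (Polynomial.Chebyshev.U ℂ (N + s - 1))).eval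
          (Complex.I / 2) := by
  induction s generalizing N with
  | zero =>
    obtain ⟨M, rfl⟩ : ∃ M, N = M + 1 := ⟨N - 1, by omega⟩
    have e : ((M + 1 : ℕ) : ℤ) + ((0:ℕ) : ℤ) - 1 = ((M : ℕ) : ℤ) := by push_cast; ring
    simp only [fibConv, e, Function.iterate_zero, id_eq, Nat.add_sub_cancel]
    rw [U_eval_fib M]
    rw [show ((-Complex.I) ^ M / (2 ^ (0:ℕ) * (Nat.factorial 0 : ℂ)) : ℂ) = (-Complex.I) ^ M from by
      norm_num]
    rw [← mul_assoc, ← mul_pow]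
    norm_num [Complex.I_mul_I]
  | succ s ih =>
    obtain ⟨M, rfl⟩ : ∃ M, N = M + 1 := ⟨N - 1, by omega⟩
    have h2 : ((2 : ℂ) ^ s) ≠ 0 := pow_ne_zero s two_ne_zero
    have hf : ((s.factorial : ℂ)) ≠ 0 := by
      exact_mod_cast Nat.cast_ne_zero.mpr (Nat.factorial_ne_zero s)
    have hconv := U_conv s M
    have hev := congrArg (Polynomial.eval (Complex.I / 2)) hconv
    rw [eval_mul, eval_C, eval_finset_sum] at hev
    simp only [fibConv]
    push_cast
    have hterm : ∀ j ∈ Finset.range (M + 1),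
        ((Nat.fib (j + 1) : ℂ)) * ((fibConv s (M + 1 - j) : ℂ)) =
          (-Complex.I) ^ M / (2 ^ s * s.factorial) *
            ((Polynomial.Chebyshev.U ℂ (j : ℤ) *
              derivative^[s] (Polynomial.Chebyshev.U ℂ ((M : ℤ) - j + s))).eval
                (Complex.I / 2)) := by
      intro j hj
      have hjM : j ≤ M := by simpa [Nat.lt_succ_iff] using hj
      rw [ih (M + 1 - j) (by omega)]
      have ei : ((M + 1 - j : ℕ) : ℤ) + (s : ℤ) - 1 = (M : ℤ) - j + s := by
        rw [Nat.cast_sub (by omega)]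
        push_cast; ring
      have en : M + 1 - j - 1 = M - j := by omega
      have hfib : ((Nat.fib (j + 1) : ℂ)) =
          (-Complex.I) ^ j * (Polynomial.Chebyshev.U ℂ (j : ℤ)).eval (Complex.I / 2) := by
        rw [U_eval_fib j, ← mul_assoc, ← mul_pow]
        norm_num [Complex.I_mul_I]
      have epow : (-Complex.I) ^ j * (-Complex.I) ^ (M - j) = (-Complex.I) ^ M := by
        rw [← pow_add]; congr 1; omega
      rw [ei, en, hfib, eval_mul]
      field_simp
      rw [← epow]
      ring
    rw [Finset.sum_congr rfl hterm, ← Finset.mul_sum]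
    have eidx : (M : ℤ) + 1 + ((s : ℤ) + 1) - 1 = (M : ℤ) + s + 1 := by ring
    rw [eidx, hev, Nat.factorial_succ]
    have hs1 : ((s : ℂ) + 1) ≠ 0 := Nat.cast_add_one_ne_zero s
    field_simp
    push_cast; ring_nf
    simp only [add_sub_right_comm]
    ring
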